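/- arXiv:1210.8273 — 5 statements merged into one kernel-verified Lean document; each statement's English description precedes it below -/
import Mathlib

section
/- Let k ≥ 2 and let Γ be a k-regular graph. Then the energy per vertex of Γ is at most (k + (k²−k)√(k−1))/(k²−k+1). -/
set_option linter.unusedSectionVars false
open Finset

section Defs
variable {V : Type*} [Fintype V] [DecidableEq V]

theorem adjMatrix_isHermitian (G : SimpleGraph V) [DecidableRel G.Adj] :
    (SimpleGraph.adjMatrix ℝ G).IsHermitian := by
  ext i j
  simp [Matrix.conjTranspose_apply, SimpleGraph.adjMatrix_apply, SimpleGraph.adj_comm]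

/-- The eigenvalues of the adjacency matrix of a graph. -/
noncomputable def adjEigs (G : SimpleGraph V) : V → ℝ := by
  classical exact (adjMatrix_isHermitian G).eigenvalues

/-- The spectrum of the graph, as a multiset of real eigenvalues. -/
noncomputable def adjSpectrum (G : SimpleGraph V) : Multiset ℝ :=
  Finset.univ.val.map (adjEigs G)

/-- The energy per vertex of a graph. -/
noncomputable def epv (G : SimpleGraph V) : ℝ :=
  (∑ i, |adjEigs G i|) / (Fintype.card V)

/-- The disjoint union of an indexed family of graphs. -/
def sigmaGraph {ι : Type*} {W : ι → Type*} (G : ∀ i, SimpleGraph (W i)) :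
    SimpleGraph (Σ i, W i) where
  Adj x y := ∃ (i : ι) (a b : W i), (G i).Adj a b ∧ x = ⟨i, a⟩ ∧ y = ⟨i, b⟩
  symm := by constructor; rintro x y ⟨i, a, b, h, rfl, rfl⟩; exact ⟨i, b, a, h.symm, rfl, rfl⟩
  loopless := by
    constructor
    rintro x ⟨i, a, b, h, rfl, h2⟩
    simp only [Sigma.mk.inj_iff, heq_eq_eq, true_and] at h2
    exact h.ne h2

/-- The bipartite incidence graph of a point-line geometry. -/
def incidenceGraph (P L : Type*) [Membership P L] : SimpleGraph (P ⊕ L) where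
  Adj x y := (∃ p l, p ∈ l ∧ x = Sum.inl p ∧ y = Sum.inr l) ∨
             (∃ p l, p ∈ l ∧ x = Sum.inr l ∧ y = Sum.inl p)
  symm := by
    constructor
    rintro x y (⟨p, l, h, rfl, rfl⟩ | ⟨p, l, h, rfl, rfl⟩)
    · exact Or.inr ⟨p, l, h, rfl, rfl⟩
    · exact Or.inl ⟨p, l, h, rfl, rfl⟩
  loopless := by constructor; rintro x (⟨p, l, h, rfl, h2⟩ | ⟨p, l, h, rfl, h2⟩) <;> simp at h2

/-- The bipartite double of a graph. -/
def bipartiteDouble (G : SimpleGraph V) : SimpleGraph (V ⊕ V) where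
  Adj x y := (∃ u v, G.Adj u v ∧ x = Sum.inl u ∧ y = Sum.inr v) ∨
             (∃ u v, G.Adj u v ∧ x = Sum.inr u ∧ y = Sum.inl v)
  symm := by
    constructor
    rintro x y (⟨u, v, h, rfl, rfl⟩ | ⟨u, v, h, rfl, rfl⟩)
    · exact Or.inr ⟨v, u, h.symm, rfl, rfl⟩
    · exact Or.inl ⟨v, u, h.symm, rfl, rfl⟩
  loopless := by constructor; rintro x (⟨u, v, h, rfl, h2⟩ | ⟨u, v, h, rfl, h2⟩) <;> simp at h2

end Defs

section EnergyHelpers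

open Matrix

theorem myTrace_pow_eq {n : Type*} [Fintype n] [DecidableEq n] {A : Matrix n n ℝ}
    (hA : A.IsHermitian) (m : ℕ) : (A ^ m).trace = ∑ i, hA.eigenvalues i ^ m := by
  set U : Matrix n n ℝ := (hA.eigenvectorUnitary : Matrix n n ℝ) with hUdef
  set D : Matrix n n ℝ := diagonal (RCLike.ofReal ∘ hA.eigenvalues) with hDdef
  have hU : star U * U = 1 := Unitary.coe_star_mul_self _
  have hU' : U * star U = 1 := Unitary.coe_mul_star_self _
  have hspec : A = U * D * star U := hA.spectral_theorem
  have key : ∀ m : ℕ, A ^ m = U * D ^ m * star U := by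
    intro m
    induction m with
    | zero => simp [hU']
    | succ m ih =>
      calc A ^ (m + 1) = (U * D ^ m * star U) * (U * D * star U) := by
            rw [pow_succ, ih, ← hspec]
        _ = U * (D ^ m * (star U * U) * D) * star U := by noncomm_ring
        _ = U * D ^ (m + 1) * star U := by rw [hU]; noncomm_ring
  rw [key m, Matrix.trace_mul_comm, ← mul_assoc, hU, one_mul, hDdef, diagonal_pow, trace_diagonal]
  simp

theorem myEig_abs_le {n : Type*} [Fintype n] [DecidableEq n] {A : Matrix n n ℝ}
    (hA : A.IsHermitian) (k : ℝ) (hdiag : ∀ i, A i i = 0)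
    (hrow : ∀ i, ∑ j, |A i j| ≤ k) (i : n) : |hA.eigenvalues i| ≤ k := by
  have hmem : hA.eigenvalues i ∈ spectrum ℝ A := hA.eigenvalues_mem_spectrum_real i
  have hmem' : hA.eigenvalues i ∈ spectrum ℝ (Matrix.toLin' A) := by
    rwa [show Matrix.toLin' A = (Matrix.toLinAlgEquiv' A : _) from rfl,
      AlgEquiv.spectrum_eq Matrix.toLinAlgEquiv']
  have heig : Module.End.HasEigenvalue (Matrix.toLin' A) (hA.eigenvalues i) :=
    Module.End.HasEigenvalue.of_mem_spectrum hmem'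
  obtain ⟨j, hj⟩ := eigenvalue_mem_ball heig
  rw [Metric.mem_closedBall, hdiag j, Real.dist_eq, sub_zero] at hj
  refine hj.trans ?_
  calc ∑ l ∈ Finset.univ.erase j, ‖A j l‖ ≤ ∑ l, |A j l| := by
        apply Finset.sum_le_sum_of_subset_of_nonneg (Finset.subset_univ _)
        intro l _ _; positivity
    _ ≤ k := hrow j

noncomputable def DD (s : ℝ) : ℝ := (s^2+1)^2 - (s^2+1) + 1
noncomputable def CC (s : ℝ) : ℝ := ((s^2+1)-s)^2/(2*s*(DD s)^2)
noncomputable def BB (s : ℝ) : ℝ := 1/(2*s) + 2*(CC s)*s^2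
noncomputable def AA (s : ℝ) : ℝ := s - (BB s)*s^2 + (CC s)*s^4

lemma DD_pos {s : ℝ} (hs : 1 ≤ s) : 0 < DD s := by unfold DD; nlinarith

lemma CC_nonneg {s : ℝ} (hs : 1 ≤ s) : 0 ≤ CC s := by
  have h0 : (0:ℝ) < s := by linarith
  have := DD_pos hs
  unfold CC; positivity

lemma pointwise_bound {s t : ℝ} (hs : 1 ≤ s) (ht : 0 ≤ t) (htk : t ≤ s^2 + 1) :
    t ≤ AA s + BB s * t^2 - CC s * t^4 := by
  have hs0 : (0:ℝ) < s := by linarith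
  have hD : 0 < DD s := DD_pos hs
  have key : (AA s + BB s*t^2 - CC s*t^4 - t) * (2*s*(DD s)^2)
      = ((s^2+1)-s)^2 * (t-s)^2 * (((s^2+1)-t) * (t+2*s+(s^2+1))) := by
    have hD' : DD s ≠ 0 := ne_of_gt hD
    have hs' : s ≠ 0 := ne_of_gt hs0
    unfold AA BB CC
    field_simp
    unfold DD
    ring
  have hrhs : 0 ≤ ((s^2+1)-s)^2 * (t-s)^2 * (((s^2+1)-t) * (t+2*s+(s^2+1))) := by
    apply mul_nonneg (mul_nonneg (sq_nonneg _) (sq_nonneg _))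
    apply mul_nonneg (by linarith) (by linarith)
  have h2 : (0:ℝ) < 2*s*(DD s)^2 := by positivity
  nlinarith [key, hrhs]

lemma bound_value {s : ℝ} (hs : 1 ≤ s) :
    AA s + BB s*(s^2+1) - CC s*((s^2+1)*(2*(s^2+1)-1))
      = ((s^2+1) + ((s^2+1)^2-(s^2+1))*s)/DD s := by
  have hs0 : (0:ℝ) < s := by linarith
  have hD : 0 < DD s := DD_pos hs
  unfold AA BB CC
  rw [eq_div_iff (ne_of_gt hD)]
  field_simp
  unfold DD
  ring

end EnergyHelpers

section GraphHelpers

open Finset Matrix SimpleGraph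

variable {V : Type*} [Fintype V] [DecidableEq V]

theorem myTrace_sq (G : SimpleGraph V) [DecidableRel G.Adj] {k : ℕ}
    (hreg : G.IsRegularOfDegree k) :
    (G.adjMatrix ℝ ^ 2).trace = (Fintype.card V : ℝ) * k := by
  rw [pow_two, Matrix.trace]
  simp only [Matrix.diag_apply, adjMatrix_mul_self_apply_self]
  simp [hreg _, mul_comm]

theorem myRow_sum_adj (G : SimpleGraph V) [DecidableRel G.Adj] {k : ℕ}
    (hreg : G.IsRegularOfDegree k) (u : V) :
    ∑ j, G.adjMatrix ℕ u j = k := by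
  have := hreg u
  rw [← this]
  simp [SimpleGraph.degree, neighborFinset_eq_filter]

theorem myRow_sum_sq (G : SimpleGraph V) [DecidableRel G.Adj] {k : ℕ}
    (hreg : G.IsRegularOfDegree k) (i : V) :
    ∑ j, (G.adjMatrix ℕ ^ 2) i j = k ^ 2 := by
  rw [pow_two]
  simp only [adjMatrix_mul_apply]
  rw [Finset.sum_comm, Finset.sum_congr rfl (fun u _ => myRow_sum_adj G hreg u)]
  simp [hreg i, pow_two]

theorem mySq_diag (G : SimpleGraph V) [DecidableRel G.Adj] {k : ℕ}
    (hreg : G.IsRegularOfDegree k) (i : V) : (G.adjMatrix ℕ ^ 2) i i = k := by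
  rw [pow_two, adjMatrix_mul_self_apply_self, hreg i]; simp

theorem myTrace_four_ge (G : SimpleGraph V) [DecidableRel G.Adj] {k : ℕ}
    (hreg : G.IsRegularOfDegree k) :
    Fintype.card V * (2 * k ^ 2 - k) ≤ (G.adjMatrix ℕ ^ 4).trace := by
  have hsymm : ∀ i j, (G.adjMatrix ℕ ^ 2) i j = (G.adjMatrix ℕ ^ 2) j i := by
    intro i j
    have h : ((G.adjMatrix ℕ ^ 2)ᵀ : Matrix V V ℕ) = G.adjMatrix ℕ ^ 2 := by
      rw [pow_two, Matrix.transpose_mul, transpose_adjMatrix, ← pow_two]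
    exact congrFun (congrFun h.symm i) j
  have htr : (G.adjMatrix ℕ ^ 4).trace
      = ∑ i, ∑ j, (G.adjMatrix ℕ ^ 2) i j * (G.adjMatrix ℕ ^ 2) i j := by
    have h4 : (4 : ℕ) = 2 + 2 := rfl
    rw [h4, pow_add, Matrix.trace]
    simp only [Matrix.diag_apply, Matrix.mul_apply]
    exact Finset.sum_congr rfl fun i _ => Finset.sum_congr rfl fun j _ => by rw [hsymm i j]
  rw [htr]
  have key : ∀ i : V, 2 * k ^ 2 - k ≤ ∑ j, (G.adjMatrix ℕ ^ 2) i j * (G.adjMatrix ℕ ^ 2) i j := by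
    intro i
    have hrow := myRow_sum_sq G hreg i
    have hdiag := mySq_diag G hreg i
    have hsplit : ∑ j, (G.adjMatrix ℕ ^ 2) i j * (G.adjMatrix ℕ ^ 2) i j
        = (G.adjMatrix ℕ ^ 2) i i * (G.adjMatrix ℕ ^ 2) i i
          + ∑ j ∈ Finset.univ.erase i, (G.adjMatrix ℕ ^ 2) i j * (G.adjMatrix ℕ ^ 2) i j := by
      rw [← Finset.sum_erase_add _ _ (Finset.mem_univ i), add_comm]
    have hsplit2 : ∑ j, (G.adjMatrix ℕ ^ 2) i j
        = (G.adjMatrix ℕ ^ 2) i i + ∑ j ∈ Finset.univ.erase i, (G.adjMatrix ℕ ^ 2) i j := by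
      rw [← Finset.sum_erase_add _ _ (Finset.mem_univ i), add_comm]
    have h1 : ∑ j ∈ Finset.univ.erase i, (G.adjMatrix ℕ ^ 2) i j
        ≤ ∑ j ∈ Finset.univ.erase i, (G.adjMatrix ℕ ^ 2) i j * (G.adjMatrix ℕ ^ 2) i j := by
      apply Finset.sum_le_sum
      intro j _
      rcases Nat.eq_zero_or_pos ((G.adjMatrix ℕ ^ 2) i j) with h | h
      · simp [h]
      · exact Nat.le_mul_of_pos_left _ h
    rw [hsplit, hdiag]
    rw [hsplit2, hdiag] at hrow
    have h2 : k ≤ k ^ 2 := Nat.le_self_pow (by norm_num) k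
    have h3 : k * k = k ^ 2 := (sq k).symm
    omega
  calc (Fintype.card V) * (2 * k ^ 2 - k) = ∑ _i : V, (2 * k ^ 2 - k) := by
        rw [Finset.sum_const, smul_eq_mul, Finset.card_univ]
    _ ≤ _ := Finset.sum_le_sum fun i _ => key i

theorem myTrace_four_cast (G : SimpleGraph V) [DecidableRel G.Adj] :
    (G.adjMatrix ℝ ^ 4).trace = ((G.adjMatrix ℕ ^ 4).trace : ℝ) := by
  have hmap : (Nat.castRingHom ℝ).mapMatrix (G.adjMatrix ℕ) = G.adjMatrix ℝ := by
    ext i j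
    simp [SimpleGraph.adjMatrix_apply, apply_ite (Nat.cast : ℕ → ℝ)]
  rw [← hmap, ← map_pow]
  simp [Matrix.trace, Matrix.diag, RingHom.mapMatrix_apply, Matrix.map_apply]

end GraphHelpers

open Finset Matrix SimpleGraph in
theorem main_aux {V : Type*} [Fintype V] [DecidableEq V] (G : SimpleGraph V)
    [inst : DecidableRel G.Adj] (k : ℕ) (hk : 2 ≤ k) (hreg : G.IsRegularOfDegree k) :
    (∑ i, |(adjMatrix_isHermitian G).eigenvalues i|) / (Fintype.card V : ℝ)
      ≤ ((k : ℝ) + ((k : ℝ) ^ 2 - k) * Real.sqrt ((k : ℝ) - 1)) /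
      ((k : ℝ) ^ 2 - k + 1) := by
  have hA : (SimpleGraph.adjMatrix ℝ G).IsHermitian := adjMatrix_isHermitian G
  set s := Real.sqrt ((k:ℝ) - 1) with hsdef
  have hk2 : (2:ℝ) ≤ (k:ℝ) := by exact_mod_cast hk
  have hs2 : s ^ 2 = (k:ℝ) - 1 := Real.sq_sqrt (by linarith)
  have hs1 : 1 ≤ s := by
    rw [show (1:ℝ) = Real.sqrt 1 from Real.sqrt_one.symm]
    exact Real.sqrt_le_sqrt (by linarith)
  have hs0 : (0:ℝ) < s := by linarith
  have hkr : (k:ℝ) = s ^ 2 + 1 := by linarith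
  have hDpos := DD_pos hs1
  have hC := CC_nonneg hs1
  have hRHS : ((k:ℝ) + ((k:ℝ)^2 - k) * s) / ((k:ℝ)^2 - k + 1)
      = AA s + BB s * (s^2+1) - CC s * ((s^2+1) * (2*(s^2+1)-1)) := by
    rw [bound_value hs1, hkr]
    unfold DD
    ring
  rcases Nat.eq_zero_or_pos (Fintype.card V) with h0 | hpos
  · rw [h0]
    rw [Nat.cast_zero, div_zero]
    apply div_nonneg
    · nlinarith [Real.sqrt_nonneg ((k:ℝ) - 1)]
    · nlinarith
  · have hcard : (0:ℝ) < (Fintype.card V : ℝ) := by exact_mod_cast hpos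
    -- eigenvalue bound
    have hrowR : ∀ i, ∑ j, |G.adjMatrix ℝ i j| ≤ (k:ℝ) := by
      intro i
      have habs : ∀ j, |G.adjMatrix ℝ i j| = G.adjMatrix ℝ i j := by
        intro j
        apply abs_of_nonneg
        simp [SimpleGraph.adjMatrix_apply]
        split <;> norm_num
      rw [Finset.sum_congr rfl fun j _ => habs j]
      have := myRow_sum_adj G hreg i
      calc ∑ j, G.adjMatrix ℝ i j = ((∑ j, G.adjMatrix ℕ i j : ℕ) : ℝ) := by
            push_cast
            apply Finset.sum_congr rfl
            intro j _
            simp [SimpleGraph.adjMatrix_apply, apply_ite (Nat.cast : ℕ → ℝ)]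
        _ ≤ (k:ℝ) := by rw [this]
    have habs : ∀ i, |hA.eigenvalues i| ≤ (k:ℝ) := by
      intro i
      exact myEig_abs_le hA (k:ℝ) (fun i => by simp) hrowR i
    have hsum2 : ∑ i, hA.eigenvalues i ^ 2 = (Fintype.card V : ℝ) * k := by
      rw [← myTrace_pow_eq hA 2, myTrace_sq G hreg]
    have hsum4 : (Fintype.card V : ℝ) * (2*(k:ℝ)^2 - k) ≤ ∑ i, hA.eigenvalues i ^ 4 := by
      rw [← myTrace_pow_eq hA 4, myTrace_four_cast G]
      have h := myTrace_four_ge G hreg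
      have hcast : ((Fintype.card V * (2*k^2 - k) : ℕ) : ℝ) ≤ ((G.adjMatrix ℕ ^ 4).trace : ℝ) :=
        Nat.cast_le.mpr h
      have hkk : k ≤ 2*k^2 := by nlinarith
      push_cast [Nat.cast_sub hkk] at hcast
      linarith
    have hpt : ∀ i, |hA.eigenvalues i|
        ≤ AA s + BB s * (hA.eigenvalues i)^2 - CC s * (hA.eigenvalues i)^4 := by
      intro i
      have h := pointwise_bound hs1 (abs_nonneg (hA.eigenvalues i))
        (by rw [← hkr]; exact habs i)
      have e2 : |hA.eigenvalues i| ^ 2 = hA.eigenvalues i ^ 2 := sq_abs _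
      have e4 : |hA.eigenvalues i| ^ 4 = hA.eigenvalues i ^ 4 := by
        rw [← abs_pow, abs_of_nonneg (by positivity)]
      rwa [e2, e4] at h
    have hE : ∑ i, |hA.eigenvalues i| ≤ (Fintype.card V : ℝ) *
        (AA s + BB s * (s^2+1) - CC s * ((s^2+1) * (2*(s^2+1)-1))) := by
      have step1 : ∑ i, |hA.eigenvalues i|
          ≤ ∑ i, (AA s + BB s * (hA.eigenvalues i)^2 - CC s * (hA.eigenvalues i)^4) :=
        Finset.sum_le_sum fun i _ => hpt i
      have step2 : ∑ i, (AA s + BB s * (hA.eigenvalues i)^2 - CC s * (hA.eigenvalues i)^4)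
          = (Fintype.card V : ℝ) * AA s + BB s * (∑ i, hA.eigenvalues i ^ 2)
            - CC s * (∑ i, hA.eigenvalues i ^ 4) := by
        rw [Finset.sum_sub_distrib, Finset.sum_add_distrib, Finset.sum_const,
          ← Finset.mul_sum, ← Finset.mul_sum, Finset.card_univ, nsmul_eq_mul]
      have step3 : (Fintype.card V : ℝ) * AA s + BB s * (∑ i, hA.eigenvalues i ^ 2)
            - CC s * (∑ i, hA.eigenvalues i ^ 4)
          ≤ (Fintype.card V : ℝ) *
            (AA s + BB s * (s^2+1) - CC s * ((s^2+1) * (2*(s^2+1)-1))) := by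
        rw [hsum2]
        rw [hkr] at hsum4
        have hmul : 0 ≤ CC s * ((∑ i, hA.eigenvalues i ^ 4)
            - (Fintype.card V : ℝ) * (2*(s^2+1)^2 - (s^2+1))) :=
          mul_nonneg hC (by linarith)
        rw [hkr]
        nlinarith [hmul]
      linarith
    rw [div_le_iff₀ hcard, hRHS]
    linarith [hE]

/-- For k ≥ 2, the energy per vertex of a k-regular graph is at most
(k + (k²−k)√(k−1))/(k²−k+1). -/
theorem epv_le_of_regular {V : Type*} [Fintype V] [DecidableEq V]
    (G : SimpleGraph V) [DecidableRel G.Adj] (k : ℕ) (hk : 2 ≤ k) (hreg : G.IsRegularOfDegree k) :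
    epv G ≤ ((k : ℝ) + ((k : ℝ) ^ 2 - k) * Real.sqrt ((k : ℝ) - 1)) /
      ((k : ℝ) ^ 2 - k + 1) := by
  have H := main_aux G k hk hreg
  unfold epv adjEigs
  convert H using 2
  congr!
end

section
/- Let k ≥ 2 and let Γ be a connected k-regular bipartite graph on n = 2m vertices with eigenvalues λ₁ ≥ ⋯ ≥ λₙ. Then the energy per vertex of Γ is at most k/m + (1/m)√((m−1)(m−k)k). -/
set_option linter.unusedSectionVars false
open Finset

section Aux
variable {n : Type*} [Fintype n] [DecidableEq n]

lemma aux_mem_spectrum {A : Matrix n n ℝ} {r : ℝ} {v : n → ℝ} (hv : v ≠ 0)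
    (h : A.mulVec v = r • v) : r ∈ spectrum ℝ A := by
  rw [spectrum.mem_iff]
  intro hu
  rw [Matrix.isUnit_iff_isUnit_det, isUnit_iff_ne_zero] at hu
  apply hu
  rw [← Matrix.exists_mulVec_eq_zero_iff]
  refine ⟨v, hv, ?_⟩
  rw [Algebra.algebraMap_eq_smul_one, Matrix.sub_mulVec, Matrix.smul_mulVec,
    Matrix.one_mulVec, h, sub_self]

lemma aux_sum_sq_eigenvalues {A : Matrix n n ℝ} (hA : A.IsHermitian) :
    ∑ i, hA.eigenvalues i ^ 2 = (A * A).trace := by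
  conv_rhs => rw [hA.spectral_theorem, Unitary.conjStarAlgAut_apply]
  set U := (Matrix.IsHermitian.eigenvectorUnitary hA : Matrix n n ℝ) with hUdef
  set D := Matrix.diagonal ((RCLike.ofReal : ℝ → ℝ) ∘ hA.eigenvalues) with hDdef
  have h1 : star U * U = 1 :=
    Matrix.mem_unitaryGroup_iff'.mp (Matrix.IsHermitian.eigenvectorUnitary hA).2
  have h2 : (U * D * star U) * (U * D * star U) = U * (D * D) * star U := by
    rw [show (U*D*star U)*(U*D*star U) = U*(D*((star U*U)*(D*star U))) by
      simp only [Matrix.mul_assoc], h1, one_mul]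
    simp only [Matrix.mul_assoc]
  rw [h2, Matrix.trace_mul_comm, ← Matrix.mul_assoc, ← Matrix.mul_assoc, h1, one_mul,
    Matrix.diagonal_mul_diagonal, Matrix.trace_diagonal]
  simp [sq]

end Aux


/-- For a connected k-regular bipartite graph on 2m vertices,
the energy per vertex is at most k/m + (1/m)√((m−1)(m−k)k). -/
theorem epv_le_of_connected_bipartite_regular {V : Type*} [Fintype V] [DecidableEq V]
    (G : SimpleGraph V) [DecidableRel G.Adj] (k m : ℕ) (hk : 2 ≤ k)
    (hconn : G.Connected) (hbip : G.Colorable 2)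
    (hreg : G.IsRegularOfDegree k) (hcard : Fintype.card V = 2 * m) :
    epv G ≤ (k : ℝ) / m +
      (1 / (m : ℝ)) * Real.sqrt (((m : ℝ) - 1) * ((m : ℝ) - k) * k) := by
  unfold epv
  have hA : (SimpleGraph.adjMatrix ℝ G).IsHermitian := adjMatrix_isHermitian G
  set A := SimpleGraph.adjMatrix ℝ G with hAdef
  set f : V → ℝ := hA.eigenvalues with hfdef
  have hfe : adjEigs G = f := by
    unfold adjEigs
    congr!
  have hV : Nonempty V := hconn.nonempty
  have hm1 : 1 ≤ m := by
    have := Fintype.card_pos (α := V); omega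
  have hrange : spectrum ℝ A = Set.range f := hA.spectrum_real_eq_range_eigenvalues
  -- k is an eigenvalue
  have hik : ∃ i, f i = (k : ℝ) := by
    have hmem : (k:ℝ) ∈ spectrum ℝ A := by
      apply aux_mem_spectrum (v := Function.const V (1:ℝ))
      · intro h
        have := congrFun h (Classical.arbitrary V)
        simp [Function.const] at this
      · funext x
        rw [SimpleGraph.adjMatrix_mulVec_const_apply_of_regular hreg]
        simp
    rw [hrange] at hmem
    exact hmem
  obtain ⟨i₀, hi₀⟩ := hik
  -- -k is an eigenvalue
  obtain ⟨c⟩ := hbip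
  have hik' : ∃ i, f i = -(k : ℝ) := by
    set w : V → ℝ := fun u => if c u = 0 then 1 else -1 with hw
    have hwne : ∀ x, w x ≠ 0 := by
      intro x
      simp only [hw]
      split_ifs <;> norm_num
    have hmem : (-(k:ℝ)) ∈ spectrum ℝ A := by
      apply aux_mem_spectrum (v := w)
      · intro h
        exact hwne (Classical.arbitrary V) (congrFun h _)
      · funext x
        rw [show A.mulVec w x = ∑ u ∈ G.neighborFinset x, w u from
          SimpleGraph.adjMatrix_mulVec_apply _ _ _]
        have hnb : ∀ u ∈ G.neighborFinset x, w u = -w x := by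
          intro u hu
          have hadj : G.Adj x u := (SimpleGraph.mem_neighborFinset _ _ _).mp hu
          have hne : c u ≠ c x := fun h => (c.valid hadj.symm) h
          have h2 : ∀ a : Fin 2, a = 0 ∨ a = 1 := by decide
          rcases h2 (c u) with h3 | h3 <;> rcases h2 (c x) with h4 | h4 <;>
            simp [hw, h3, h4] at hne ⊢
        rw [Finset.sum_congr rfl hnb, Finset.sum_const, G.card_neighborFinset_eq_degree, hreg x]
        simp only [Pi.smul_apply, smul_eq_mul, nsmul_eq_mul]
        ring
    rw [hrange] at hmem
    exact hmem
  obtain ⟨i₁, hi₁⟩ := hik'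
  have hne01 : i₀ ≠ i₁ := by
    intro h
    rw [h, hi₁] at hi₀
    have : (0:ℝ) < k := by positivity
    linarith
  -- total sum of squares
  have htr : ∑ i, f i ^ 2 = 2 * m * k := by
    rw [aux_sum_sq_eigenvalues hA]
    have : (A * A).trace = ∑ i, ((G.degree i : ℝ)) := by
      rw [Matrix.trace]
      refine Finset.sum_congr rfl fun i _ => ?_
      rw [Matrix.diag_apply, hAdef, SimpleGraph.adjMatrix_mul_self_apply_self]
    rw [this]
    have : ∀ i : V, ((G.degree i : ℝ)) = (k : ℝ) := fun i => by rw [hreg i]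
    rw [Finset.sum_congr rfl fun i _ => this i, Finset.sum_const, Finset.card_univ, hcard]
    push_cast
    ring
  set s : Finset V := univ \ {i₀, i₁} with hs
  have hsub : ({i₀, i₁} : Finset V) ⊆ univ := subset_univ _
  have hpairsum : ∀ g : V → ℝ, ∑ i ∈ s, g i + (g i₀ + g i₁) = ∑ i, g i := by
    intro g
    rw [← Finset.sum_pair hne01]
    exact Finset.sum_sdiff hsub
  -- sum of squares over s
  have hS : ∑ i ∈ s, f i ^ 2 = 2 * m * k - 2 * k ^ 2 := by
    have := hpairsum (fun i => f i ^ 2)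
    simp only [hi₀, hi₁] at this
    nlinarith [this, htr]
  have hSnn : (0:ℝ) ≤ ∑ i ∈ s, f i ^ 2 := Finset.sum_nonneg fun i _ => sq_nonneg _
  have hkpos : (0:ℝ) < k := by positivity
  have hmk : (k:ℝ) ≤ m := by nlinarith [hS, hSnn]
  have hscard : (s.card : ℝ) = 2 * m - 2 := by
    rw [hs, Finset.card_sdiff_of_subset hsub, Finset.card_univ, hcard, Finset.card_pair hne01]
    have : 2 ≤ 2 * m := by omega
    push_cast [Nat.cast_sub this]
    ring
  -- Cauchy-Schwarz
  have hCS : (∑ i ∈ s, |f i|) ^ 2 ≤ (2 * m - 2) * (2 * m * k - 2 * k ^ 2) := by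
    have h1 : (∑ i ∈ s, |f i|) ^ 2 ≤ s.card * ∑ i ∈ s, |f i| ^ 2 :=
      sq_sum_le_card_mul_sum_sq
    simp only [sq_abs] at h1
    rw [hS, hscard] at h1
    exact h1
  have habs_nn : (0:ℝ) ≤ ∑ i ∈ s, |f i| := Finset.sum_nonneg fun i _ => abs_nonneg _
  set X : ℝ := ((m : ℝ) - 1) * ((m : ℝ) - k) * k with hX
  have hXnn : (0:ℝ) ≤ X := by
    have h1 : (1:ℝ) ≤ m := by exact_mod_cast hm1
    apply mul_nonneg (mul_nonneg (by linarith) (by linarith)) (le_of_lt hkpos)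
  have hsqrt : ∑ i ∈ s, |f i| ≤ 2 * Real.sqrt X := by
    have h2 : ∑ i ∈ s, |f i| ≤ Real.sqrt ((2 * m - 2) * (2 * m * k - 2 * k ^ 2)) := by
      rw [← Real.sqrt_sq habs_nn]
      exact Real.sqrt_le_sqrt hCS
    have h3 : (2 * (m:ℝ) - 2) * (2 * m * k - 2 * k ^ 2) = (2:ℝ) ^ 2 * X := by
      rw [hX]; ring
    rw [h3, Real.sqrt_mul (by norm_num) X, Real.sqrt_sq (by norm_num)] at h2
    exact h2
  -- energy
  have hE : ∑ i, |f i| ≤ 2 * k + 2 * Real.sqrt X := by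
    rw [← hpairsum (fun i => |f i|)]
    simp only [hi₀, hi₁, abs_neg, abs_of_pos hkpos]
    linarith
  have hmpos : (0:ℝ) < m := by exact_mod_cast hm1
  rw [hfe, hcard]
  have hcV : ((2 * m : ℕ) : ℝ) = 2 * m := by push_cast; ring
  rw [hcV]
  rw [div_le_iff₀ (by positivity)]
  have hrhs : ((k : ℝ) / m + (1 / (m : ℝ)) * Real.sqrt X) * (2 * m)
      = 2 * k + 2 * Real.sqrt X := by
    field_simp
  rw [hrhs]
  exact hE
end

section
/- Fix k ≥ 2 and m ≥ 1, and consider real variables m₁, m₂ ≥ 0 with m₁ + m₂ ≤ m and θ₁ < θ₂ < k with θ₁, θ₂ ≥ 0, subject to m₁θ₁² + m₂θ₂² + (m−m₁−m₂)k² = mk and m₁θ₁⁴ + m₂θ₂⁴ + (m−m₁−m₂)k⁴ = mk(2k−1). Then the function m₁θ₁ + m₂θ₂ + (m−m₁−m₂)k has no maximizer over this feasible set with m₁ > 0 and m₂ > 0. -/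
set_option linter.unusedSectionVars false
open Finset

private lemma two_point_jensen (k w₁ w₂ s₁ s₂ s : ℝ) (hk : 0 < k) (hw₁ : 0 < w₁) (hw₂ : 0 < w₂)
    (hs₁ : 0 ≤ s₁) (h12 : s₁ < s₂) (hs : 0 ≤ s)
    (hmom : w₁ * s₁ ^ 2 + w₂ * s₂ ^ 2 = (w₁ + w₂) * s ^ 2) :
    (w₁ + w₂) / (k + s) < w₁ / (k + s₁) + w₂ / (k + s₂) := by
  have hs2 : 0 < s₂ := lt_of_le_of_lt hs₁ h12
  have hd : s₁ ^ 2 < s₂ ^ 2 := by nlinarith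
  have hsq1 : s₁ ^ 2 < s ^ 2 := by nlinarith [mul_pos hw₂ (sub_pos.mpr hd), mul_pos hw₁ (sub_pos.mpr hd)]
  have hsq2 : s ^ 2 < s₂ ^ 2 := by nlinarith [mul_pos hw₂ (sub_pos.mpr hd), mul_pos hw₁ (sub_pos.mpr hd)]
  have hlt1 : s₁ < s := by nlinarith
  have hlt2 : s < s₂ := by nlinarith
  have d0 : 0 < k + s := by linarith
  have d1 : 0 < k + s₁ := by linarith
  have d2 : 0 < k + s₂ := by linarith
  rw [div_add_div _ _ (ne_of_gt d1) (ne_of_gt d2), div_lt_div_iff₀ d0 (mul_pos d1 d2)]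
  have hA : 0 < w₁ * (s - s₁) := mul_pos hw₁ (by linarith)
  have hB : 0 < w₂ * (s₂ - s) := mul_pos hw₂ (by linarith)
  have hAB : w₁ * (s - s₁) * (s + s₁) = w₂ * (s₂ - s) * (s₂ + s) := by nlinarith
  nlinarith [mul_pos hA hB, mul_pos hA (mul_pos d1 d2), mul_pos hB (mul_pos d1 d2),
    mul_pos hA d2, mul_pos hB d1, mul_lt_mul_of_pos_left h12 hB]


set_option maxHeartbeats 1000000

/-- the relaxed two-value optimization problem has no maximizer with
m₁ > 0 and m₂ > 0. -/
theorem no_two_value_maximizer (k m : ℕ) (hk : 2 ≤ k) (hm : 1 ≤ m) :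
    ¬ ∃ m₁ m₂ θ₁ θ₂ : ℝ,
      (0 ≤ m₁ ∧ 0 ≤ m₂ ∧ m₁ + m₂ ≤ (m : ℝ) ∧ 0 ≤ θ₁ ∧ θ₁ < θ₂ ∧ θ₂ < (k : ℝ) ∧
        m₁ * θ₁ ^ 2 + m₂ * θ₂ ^ 2 + ((m : ℝ) - m₁ - m₂) * (k : ℝ) ^ 2 = (m : ℝ) * k ∧
        m₁ * θ₁ ^ 4 + m₂ * θ₂ ^ 4 + ((m : ℝ) - m₁ - m₂) * (k : ℝ) ^ 4 =
          (m : ℝ) * k * (2 * (k : ℝ) - 1)) ∧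
      0 < m₁ ∧ 0 < m₂ ∧
      (∀ n₁ n₂ μ₁ μ₂ : ℝ,
        (0 ≤ n₁ ∧ 0 ≤ n₂ ∧ n₁ + n₂ ≤ (m : ℝ) ∧ 0 ≤ μ₁ ∧ μ₁ < μ₂ ∧ μ₂ < (k : ℝ) ∧
          n₁ * μ₁ ^ 2 + n₂ * μ₂ ^ 2 + ((m : ℝ) - n₁ - n₂) * (k : ℝ) ^ 2 = (m : ℝ) * k ∧
          n₁ * μ₁ ^ 4 + n₂ * μ₂ ^ 4 + ((m : ℝ) - n₁ - n₂) * (k : ℝ) ^ 4 =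
            (m : ℝ) * k * (2 * (k : ℝ) - 1)) →
        n₁ * μ₁ + n₂ * μ₂ + ((m : ℝ) - n₁ - n₂) * k ≤
          m₁ * θ₁ + m₂ * θ₂ + ((m : ℝ) - m₁ - m₂) * k) := by
  rintro ⟨m₁, m₂, θ₁, θ₂, ⟨hm₁0, hm₂0, hsum, hθ₁0, h12, h2k, hc2, hc4⟩, hm₁, hm₂, hmax⟩
  set K : ℝ := (k : ℝ) with hK
  have hk2 : (2 : ℝ) ≤ K := by rw [hK]; exact_mod_cast hk
  have hm1 : (1 : ℝ) ≤ (m : ℝ) := by exact_mod_cast hm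
  have hD : (0 : ℝ) < K ^ 2 - K + 1 := by nlinarith
  set n : ℝ := (m : ℝ) * (K ^ 2 - K) / (K ^ 2 - K + 1) with hn
  set μ : ℝ := Real.sqrt (K - 1) with hμ
  have hμsq : μ ^ 2 = K - 1 := Real.sq_sqrt (by linarith)
  have hμ0 : 0 < μ := Real.sqrt_pos.mpr (by linarith)
  have hμK : μ < K := by nlinarith [hμsq, hμ0]
  have hn0 : 0 ≤ n := by
    apply div_nonneg _ hD.le
    apply mul_nonneg (by linarith) (by nlinarith)
  have hnm : (0 : ℝ) + n ≤ (m : ℝ) := by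
    rw [zero_add, hn, div_le_iff₀ hD]
    nlinarith
  have hμ4 : μ ^ 4 = (K - 1) ^ 2 := by
    rw [show (4 : ℕ) = 2 * 2 from rfl, pow_mul, hμsq]
  have hf2 : (0:ℝ) * 0 ^ 2 + n * μ ^ 2 + ((m : ℝ) - 0 - n) * K ^ 2 = (m : ℝ) * K := by
    rw [hμsq, hn]; field_simp [show K * (K - 1) + 1 ≠ 0 by nlinarith]; ring
  have hf4 : (0:ℝ) * 0 ^ 4 + n * μ ^ 4 + ((m : ℝ) - 0 - n) * K ^ 4 = (m : ℝ) * K * (2 * K - 1) := by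
    rw [hμ4, hn]; field_simp [show K * (K - 1) + 1 ≠ 0 by nlinarith]; ring
  have hfeas := hmax 0 n 0 μ ⟨le_refl 0, hn0, hnm, le_refl 0, hμ0, hμK, hf2, hf4⟩
  -- weights
  set w₁ : ℝ := m₁ * (K ^ 2 - θ₁ ^ 2) with hw₁def
  set w₂ : ℝ := m₂ * (K ^ 2 - θ₂ ^ 2) with hw₂def
  have hθ₁K : θ₁ < K := lt_trans h12 h2k
  have hw₁ : 0 < w₁ := mul_pos hm₁ (by nlinarith)
  have hw₂ : 0 < w₂ := mul_pos hm₂ (by nlinarith)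
  have hmom : w₁ * θ₁ ^ 2 + w₂ * θ₂ ^ 2 = (w₁ + w₂) * μ ^ 2 := by
    rw [hμsq, hw₁def, hw₂def]
    linear_combination (K ^ 2 + K - 1) * hc2 - hc4
  have hS : w₁ + w₂ = (m : ℝ) * K ^ 2 - (m : ℝ) * K := by
    rw [hw₁def, hw₂def]
    linear_combination -hc2
  have hk0 : (0 : ℝ) < K := by linarith
  have key := two_point_jensen K w₁ w₂ θ₁ θ₂ μ hk0 hw₁ hw₂ hθ₁0 h12 hμ0.le hmom
  -- rewrite the fractions
  have d0 : (0 : ℝ) < K + μ := by linarith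
  have d1 : (0 : ℝ) < K + θ₁ := by linarith
  have d2 : (0 : ℝ) < K + θ₂ := by linarith
  have e1 : w₁ / (K + θ₁) = m₁ * (K - θ₁) := by
    rw [hw₁def, div_eq_iff (ne_of_gt d1)]; ring
  have e2 : w₂ / (K + θ₂) = m₂ * (K - θ₂) := by
    rw [hw₂def, div_eq_iff (ne_of_gt d2)]; ring
  have e0 : (w₁ + w₂) / (K + μ) = n * (K - μ) := by
    rw [hS, div_eq_iff (ne_of_gt d0), hn]
    field_simp [show K * (K - 1) + 1 ≠ 0 by nlinarith]
    linear_combination (K - 1) * hμsq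
  rw [e0, e1, e2] at key
  -- contradiction with hfeas
  have : 0 * 0 + n * μ + ((m : ℝ) - 0 - n) * K >
      m₁ * θ₁ + m₂ * θ₂ + ((m : ℝ) - m₁ - m₂) * K := by nlinarith [key]
  linarith [hfeas]
end

section
/- Fix k ≥ 2 and m = t(k²−k+1) for a positive integer t. For real variables ℓ and θ with 0 ≤ ℓ ≤ m, 0 ≤ θ ≤ k, subject to ℓθ² + (m−ℓ)k² = mk and ℓθ⁴ + (m−ℓ)k⁴ ≥ mk(2k−1), the objective ℓθ + (m−ℓ)k is maximized uniquely at θ = √(k−1) and ℓ = m − t, giving maximal value tk + t(k²−k)√(k−1). -/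
set_option linter.unusedSectionVars false
open Finset

set_option maxHeartbeats 1000000 in
/-- the one-value reduced optimization problem is maximized uniquely at
θ = √(k−1), ℓ = m − t, with maximal value tk + t(k²−k)√(k−1). -/
theorem one_value_optimization (k t m : ℕ) (hk : 2 ≤ k) (ht : 1 ≤ t)
    (hm : m = t * (k ^ 2 - k + 1)) :
    (∀ ℓ θ : ℝ, 0 ≤ ℓ → ℓ ≤ (m : ℝ) → 0 ≤ θ → θ ≤ (k : ℝ) →
      ℓ * θ ^ 2 + ((m : ℝ) - ℓ) * (k : ℝ) ^ 2 = (m : ℝ) * k →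
      ℓ * θ ^ 4 + ((m : ℝ) - ℓ) * (k : ℝ) ^ 4 ≥ (m : ℝ) * k * (2 * (k : ℝ) - 1) →
      (ℓ * θ + ((m : ℝ) - ℓ) * k ≤
        (t : ℝ) * k + (t : ℝ) * ((k : ℝ) ^ 2 - k) * Real.sqrt ((k : ℝ) - 1) ∧
      (ℓ * θ + ((m : ℝ) - ℓ) * k =
          (t : ℝ) * k + (t : ℝ) * ((k : ℝ) ^ 2 - k) * Real.sqrt ((k : ℝ) - 1) ↔
        θ = Real.sqrt ((k : ℝ) - 1) ∧ ℓ = (m : ℝ) - t))) ∧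
    -- the maximum is attained at the feasible point (ℓ, θ) = (m − t, √(k−1)):
    (0 ≤ (m : ℝ) - t ∧ (m : ℝ) - t ≤ (m : ℝ) ∧
      0 ≤ Real.sqrt ((k : ℝ) - 1) ∧ Real.sqrt ((k : ℝ) - 1) ≤ (k : ℝ) ∧
      ((m : ℝ) - t) * (Real.sqrt ((k : ℝ) - 1)) ^ 2 + ((m : ℝ) - ((m : ℝ) - t)) * (k : ℝ) ^ 2 =
        (m : ℝ) * k ∧
      ((m : ℝ) - t) * (Real.sqrt ((k : ℝ) - 1)) ^ 4 + ((m : ℝ) - ((m : ℝ) - t)) * (k : ℝ) ^ 4 ≥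
        (m : ℝ) * k * (2 * (k : ℝ) - 1) ∧
      ((m : ℝ) - t) * Real.sqrt ((k : ℝ) - 1) + ((m : ℝ) - ((m : ℝ) - t)) * k =
        (t : ℝ) * k + (t : ℝ) * ((k : ℝ) ^ 2 - k) * Real.sqrt ((k : ℝ) - 1)) := by
  have hk2 : (2:ℝ) ≤ (k:ℝ) := by exact_mod_cast hk
  have ht1 : (1:ℝ) ≤ (t:ℝ) := by exact_mod_cast ht
  set K : ℝ := (k:ℝ) with hKdef
  set T : ℝ := (t:ℝ) with hTdef
  have hkk : k ≤ k ^ 2 := Nat.le_self_pow two_ne_zero k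
  have hm' : (m:ℝ) = T * (K ^ 2 - K + 1) := by
    subst hm
    push_cast [Nat.cast_sub hkk]
    ring
  set s : ℝ := Real.sqrt (K - 1) with hsdef
  have hs0 : 0 ≤ s := Real.sqrt_nonneg _
  have hs2 : s ^ 2 = K - 1 := Real.sq_sqrt (by linarith)
  have hs4 : s ^ 4 = (K - 1) ^ 2 := by rw [← hs2]; ring
  have hsK : s < K := by nlinarith [hs2, hs0]
  have hM : 0 < (m:ℝ) := by rw [hm']; nlinarith
  have hpos : 0 < (m:ℝ) * K * (K - 1) := by
    apply mul_pos (mul_pos hM (by linarith)) (by linarith)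
  have hq : (0:ℝ) < K ^ 2 - K + 1 := by nlinarith
  have hB0 : 0 < (m:ℝ) * K - T * K - T * (K ^ 2 - K) * s := by
    nlinarith [mul_pos (mul_pos (show (0:ℝ) < T by linarith) (show (0:ℝ) < K^2 - K by nlinarith)) (show (0:ℝ) < K - s by linarith), hm']
  constructor
  · intro ℓ θ hℓ0 hℓm hθ0 hθK hc1 hc2
    have h1 : ℓ * (K ^ 2 - θ ^ 2) = (m:ℝ) * (K ^ 2 - K) := by linear_combination -hc1
    have hθltK : θ < K := by
      rcases lt_or_eq_of_le hθK with h | h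
      · exact h
      · exfalso; subst h; nlinarith [h1, hM, hk2]
    have key : ℓ * θ ^ 4 + ((m:ℝ) - ℓ) * K ^ 4 - (m:ℝ) * K * (2 * K - 1)
        = (m:ℝ) * K * (K - 1) * ((K - 1) - θ ^ 2) := by
      linear_combination (-(K ^ 2 + θ ^ 2)) * h1
    have h4 : 0 ≤ (m:ℝ) * K * (K - 1) * ((K - 1) - θ ^ 2) := by linarith [key, hc2]
    have hθ2 : θ ^ 2 ≤ K - 1 := by nlinarith [h4, hpos]
    have hθs : θ ≤ s := by
      have h := Real.sqrt_le_sqrt hθ2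
      rwa [Real.sqrt_sq hθ0] at h
    have hA : (ℓ * (K - θ)) * (K + θ) = (m:ℝ) * K * (K - 1) := by linear_combination h1
    have hB : ((m:ℝ) * K - T * K - T * (K ^ 2 - K) * s) * (K + s) = (m:ℝ) * K * (K - 1) := by
      linear_combination (-(T * (K ^ 2 - K))) * hs2 + (K * s + K) * hm'
    have hAB : (ℓ * (K - θ) - ((m:ℝ) * K - T * K - T * (K ^ 2 - K) * s)) * (K + θ)
        = ((m:ℝ) * K - T * K - T * (K ^ 2 - K) * s) * (s - θ) := by
      linear_combination hA - hB
    have hABge : (m:ℝ) * K - T * K - T * (K ^ 2 - K) * s ≤ ℓ * (K - θ) := by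
      nlinarith [hAB, mul_nonneg hB0.le (sub_nonneg.mpr hθs), hθ0, hθltK]
    constructor
    · nlinarith [hABge]
    constructor
    · intro heq
      have hABeq : ℓ * (K - θ) = (m:ℝ) * K - T * K - T * (K ^ 2 - K) * s := by
        linear_combination -heq
      have h6 : ((m:ℝ) * K - T * K - T * (K ^ 2 - K) * s) * (s - θ) = 0 := by
        linear_combination (-1) * hAB + (K + θ) * hABeq
      have hθeq : θ = s := by
        rcases mul_eq_zero.mp h6 with h | h
        · exact absurd h hB0.ne'
        · linarith
      refine ⟨hθeq, ?_⟩
      have h5 : ℓ * (K ^ 2 - K + 1) = ((m:ℝ) - T) * (K ^ 2 - K + 1) := by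
        subst hθeq
        linear_combination h1 + ℓ * hs2 - hm'
      exact mul_right_cancel₀ hq.ne' h5
    · rintro ⟨hθeq, hℓeq⟩
      subst hθeq; subst hℓeq
      linear_combination s * hm'
  · refine ⟨?_, ?_, hs0, hsK.le, ?_, ?_, ?_⟩
    · nlinarith [hm']
    · linarith
    · linear_combination ((m:ℝ) - T) * hs2 - hm'
    · have : ((m:ℝ) - T) * s ^ 4 + ((m:ℝ) - ((m:ℝ) - T)) * K ^ 4 = (m:ℝ) * K * (2 * K - 1) := by
        rw [hs4, hm']; ring
      linarith [this]
    · linear_combination s * hm'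
end

section
/- For k ≥ 2, suppose Γ is k-regular with m = t(k²−k+1) in its bipartite form and the first m eigenvalues of Γ (nonnegative half of the spectrum) satisfy 0 ≤ λᵢ ≤ k, ∑λᵢ² = mk, and ∑λᵢ⁴ ≥ mk(2k−1), with ∑λᵢ = tk + t(k²−k)√(k−1). Then t of the λᵢ equal k and the rest equal √(k−1). -/
set_option linter.unusedSectionVars false
open Finset

/-- equality characterization — if the nonnegative half of the spectrum
of a k-regular bipartite graph attains the bound, then t of the values equal k and
the rest equal √(k−1). -/
theorem equality_case (k t m : ℕ) (hk : 2 ≤ k) (ht : 1 ≤ t)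
    (hm : m = t * (k ^ 2 - k + 1)) (lam : Fin m → ℝ)
    (hnonneg : ∀ i, 0 ≤ lam i) (hle : ∀ i, lam i ≤ k)
    (hsq : ∑ i, (lam i) ^ 2 = (m : ℝ) * k)
    (hquart : ∑ i, (lam i) ^ 4 ≥ (m : ℝ) * k * (2 * (k : ℝ) - 1))
    (hsum : ∑ i, lam i = (t : ℝ) * k + (t : ℝ) * ((k : ℝ) ^ 2 - k) * Real.sqrt ((k : ℝ) - 1)) :
    (Finset.univ.filter fun i => lam i = (k : ℝ)).card = t ∧
      ∀ i, lam i = (k : ℝ) ∨ lam i = Real.sqrt ((k : ℝ) - 1) := by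
  have hkR : (2:ℝ) ≤ (k:ℝ) := by exact_mod_cast hk
  set s := Real.sqrt ((k:ℝ) - 1) with hs_def
  have hs2 : s ^ 2 = (k:ℝ) - 1 := Real.sq_sqrt (by linarith)
  have hs1 : (1:ℝ) ≤ s := by
    rw [show (1:ℝ) = Real.sqrt 1 by simp]
    exact Real.sqrt_le_sqrt (by linarith)
  have hmR : (m:ℝ) = (t:ℝ) * ((k:ℝ)^2 - (k:ℝ) + 1) := by
    have hkk : k ≤ k^2 := Nat.le_self_pow two_ne_zero k
    subst hm; push_cast [hkk]; ring
  set q : Fin m → ℝ := fun i => -((lam i - s)^2 * (lam i - k) * (lam i + 2*s + k)) with hq_def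
  have hq0 : ∀ i, 0 ≤ q i := by
    intro i
    have h1 : lam i - k ≤ 0 := by linarith [hle i]
    have h2 : 0 ≤ lam i + 2*s + k := by linarith [hnonneg i]
    have h3 : 0 ≤ (lam i - s)^2 * (lam i + 2*s + k) * ((k:ℝ) - lam i) :=
      mul_nonneg (mul_nonneg (sq_nonneg _) h2) (by linarith)
    simp only [hq_def]
    nlinarith [h3]
  have hexp : ∀ i, q i = -(lam i^4) + ((k:ℝ)^2+2*s*k+3*s^2)*(lam i^2)
      - (2*s*((k:ℝ)+s)^2)*(lam i) + s^2*k*((k:ℝ)+2*s) := by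
    intro i; simp only [hq_def]; ring
  have hsum_q : ∑ i, q i = -(∑ i, lam i^4) + ((k:ℝ)^2+2*s*k+3*s^2)*((m:ℝ)*k)
      - (2*s*((k:ℝ)+s)^2)*((t:ℝ)*k + (t:ℝ)*((k:ℝ)^2-k)*s) + (m:ℝ)*(s^2*k*((k:ℝ)+2*s)) := by
    rw [Finset.sum_congr rfl fun i _ => hexp i]
    rw [Finset.sum_add_distrib, Finset.sum_sub_distrib, Finset.sum_add_distrib,
      Finset.sum_neg_distrib, ← Finset.mul_sum, ← Finset.mul_sum, Finset.sum_const,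
      Finset.card_univ, Fintype.card_fin, nsmul_eq_mul, hsq, hsum]
  have hzero : ∑ i, q i = 0 := by
    have hle0 : ∑ i, q i ≤ 0 := by
      rw [hsum_q]
      have hG : -((m:ℝ)*k*(2*(k:ℝ)-1)) + ((k:ℝ)^2+2*s*k+3*s^2)*((m:ℝ)*k)
          - (2*s*((k:ℝ)+s)^2)*((t:ℝ)*k + (t:ℝ)*((k:ℝ)^2-k)*s)
          + (m:ℝ)*(s^2*k*((k:ℝ)+2*s)) = 0 := by
        linear_combination ((t:ℝ)*k - 2*(t:ℝ)*k^2 + 2*(t:ℝ)*k^3 - (t:ℝ)*k^4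
            + 2*s*(t:ℝ)*k^2 - 2*s*(t:ℝ)*k^3 + 2*s^2*(t:ℝ)*k - 2*s^2*(t:ℝ)*k^2) * hs2
          + ((k:ℝ) - 2*(k:ℝ)^2 + (k:ℝ)^3 + 2*s*(k:ℝ)^2 + 3*s^2*(k:ℝ) + s^2*(k:ℝ)^2
            + 2*s^3*(k:ℝ)) * hmR
      linarith [hquart]
    linarith [Finset.sum_nonneg fun i (_ : i ∈ Finset.univ) => hq0 i]
  have heach : ∀ i, lam i = (k:ℝ) ∨ lam i = s := by
    intro i
    have h := (Finset.sum_eq_zero_iff_of_nonneg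
      (fun i (_ : i ∈ Finset.univ) => hq0 i)).mp hzero i (Finset.mem_univ i)
    have h2 : 0 < lam i + 2*s + k := by linarith [hnonneg i]
    simp only [hq_def, neg_eq_zero] at h
    rcases mul_eq_zero.mp h with h3 | h3
    · rcases mul_eq_zero.mp h3 with h4 | h4
      · right; have := pow_eq_zero_iff (n := 2) two_ne_zero |>.mp h4; linarith
      · left; linarith
    · exfalso; linarith
  have hs_lt_k : s < (k:ℝ) := by nlinarith
  refine ⟨?_, heach⟩
  -- count
  set F := Finset.univ.filter fun i => lam i = (k : ℝ) with hF
  have hsplit : ∑ i, (lam i)^2 = (F.card : ℝ) * (k:ℝ)^2 + ((m:ℝ) - F.card) * ((k:ℝ)-1) := by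
    rw [← Finset.sum_filter_add_sum_filter_not Finset.univ (fun i => lam i = (k:ℝ))]
    have h1 : ∑ i ∈ F, (lam i)^2 = (F.card : ℝ) * (k:ℝ)^2 := by
      rw [Finset.sum_congr rfl fun i hi => by
        rw [(Finset.mem_filter.mp hi).2]]
      simp [mul_comm]
    have h2 : ∑ i ∈ Finset.univ.filter (fun i => ¬ lam i = (k:ℝ)), (lam i)^2
        = ((m:ℝ) - F.card) * ((k:ℝ)-1) := by
      have : ∀ i ∈ Finset.univ.filter (fun i => ¬ lam i = (k:ℝ)), (lam i)^2 = (k:ℝ)-1 := by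
        intro i hi
        have hne := (Finset.mem_filter.mp hi).2
        rcases heach i with h | h
        · exact absurd h hne
        · rw [h, hs2]
      rw [Finset.sum_congr rfl this, Finset.sum_const, nsmul_eq_mul]
      congr 1
      have hun : F.card + (Finset.univ.filter (fun i => ¬ lam i = (k:ℝ))).card = m := by
        rw [hF]
        rw [Finset.card_filter_add_card_filter_not]
        simp
      have hFle : F.card ≤ m := by omega
      have hcard : (Finset.univ.filter (fun i => ¬ lam i = (k:ℝ))).card = m - F.card := by
        omega
      rw [hcard]
      push_cast [Nat.cast_sub hFle]
      ring
    rw [h1, h2]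
  rw [hsq] at hsplit
  have hcardR : (F.card : ℝ) = (t:ℝ) := by
    have hpos : (0:ℝ) < (k:ℝ)^2 - k + 1 := by nlinarith
    have : (F.card : ℝ) * ((k:ℝ)^2 - k + 1) = (t:ℝ) * ((k:ℝ)^2 - k + 1) := by
      rw [← hmR]; linarith [hsplit]
    exact mul_right_cancel₀ (ne_of_gt hpos) this
  exact_mod_cast hcardR
end
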